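/- Let G ≤ Sym(V) be a transitive permutation group and let H ≤ Sₙ be a transitive permutation group having the EKR-property. Then the intersection density of the wreath product satisfies ρ(G ≀ H) = ρ(G). -/

import Mathlib

/-! ### Basic definitions: derangement graphs, intersecting sets, EKR properties -/

/-- The derangement graph of a permutation group `G ≤ Sym(V)`: vertices are the elements
of `G`, and distinct `g`, `h` are adjacent iff `g * h⁻¹` is fixed-point-free on `V`. -/
def derGraph {V : Type*} (G : Subgroup (Equiv.Perm V)) : SimpleGraph G where
  Adj g h := g ≠ h ∧ ∀ v : V, ((g : Equiv.Perm V) * (h : Equiv.Perm V)⁻¹) v ≠ v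
  symm := ⟨by
    rintro g h ⟨hne, hd⟩
    refine ⟨hne.symm, fun v hv => hd v ?_⟩
    have h2 := congrArg (⇑(((h : Equiv.Perm V) * (g : Equiv.Perm V)⁻¹)⁻¹)) hv
    simpa [mul_inv_rev] using h2.symm⟩
  loopless := ⟨fun g hg => hg.1 rfl⟩

/-- A subset `I` of a permutation group `G ≤ Sym(V)` is intersecting if any two of its
elements agree on some point of `V`. -/
def IsIntersecting {V : Type*} (G : Subgroup (Equiv.Perm V)) (I : Set G) : Prop :=
  ∀ g ∈ I, ∀ h ∈ I, ∃ v : V, (g : Equiv.Perm V) v = (h : Equiv.Perm V) v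

/-- A permutation group `G ≤ Sym(V)` is transitive if it acts transitively on `V`. -/
def IsTransitive {V : Type*} (G : Subgroup (Equiv.Perm V)) : Prop :=
  ∀ v w : V, ∃ g ∈ G, g v = w

/-- A permutation group is regular if it is transitive and all point stabilizers are trivial. -/
def IsRegularGroup {V : Type*} (G : Subgroup (Equiv.Perm V)) : Prop :=
  IsTransitive G ∧ ∀ g ∈ G, ∀ v : V, g v = v → g = 1

/-- The stabilizer of a point `v`, as a subset of the permutation group `G`. -/
def stabSet {V : Type*} (G : Subgroup (Equiv.Perm V)) (v : V) : Set G :=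
  {g : G | (g : Equiv.Perm V) v = v}

/-- The intersection density `ρ(G)` of a (transitive) permutation group `G`: the maximum of
`|I| / |G_v|` over all intersecting sets `I` of `G`, where `G_v` is a point stabilizer. -/
noncomputable def interDensity {V : Type*} (G : Subgroup (Equiv.Perm V)) : ℝ :=
  sSup {x : ℝ | ∃ (I : Set G) (v : V), IsIntersecting G I ∧
    x = (Nat.card I : ℝ) / (Nat.card (stabSet G v) : ℝ)}

/-- A permutation group has the EKR-property if every intersecting set has size at most
the size of the largest point stabilizer. -/
def HasEKR {V : Type*} (G : Subgroup (Equiv.Perm V)) : Prop :=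
  ∀ I : Set G, IsIntersecting G I → Nat.card I ≤ ⨆ v : V, Nat.card (stabSet G v)

/-- A permutation group has the strict-EKR-property if every intersecting set of maximum
size is a coset of a point stabilizer. -/
def HasStrictEKR {V : Type*} (G : Subgroup (Equiv.Perm V)) : Prop :=
  ∀ I : Set G, IsIntersecting G I →
    (∀ J : Set G, IsIntersecting G J → Nat.card J ≤ Nat.card I) →
    ∃ (v : V) (a : G), I = (fun g => a * g) '' stabSet G v

/-! ### Graph products and related graph-theoretic notions -/

/-- The strong product of two simple graphs. -/
def strongProd {α β : Type*} (X : SimpleGraph α) (Y : SimpleGraph β) :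
    SimpleGraph (α × β) where
  Adj p q := (p.1 = q.1 ∧ Y.Adj p.2 q.2) ∨ (p.2 = q.2 ∧ X.Adj p.1 q.1) ∨
    (X.Adj p.1 q.1 ∧ Y.Adj p.2 q.2)
  symm := ⟨by
    rintro p q (⟨h1, h2⟩ | ⟨h1, h2⟩ | ⟨h1, h2⟩)
    · exact Or.inl ⟨h1.symm, h2.symm⟩
    · exact Or.inr (Or.inl ⟨h1.symm, h2.symm⟩)
    · exact Or.inr (Or.inr ⟨h1.symm, h2.symm⟩)⟩
  loopless := ⟨by
    rintro p (⟨_, h⟩ | ⟨_, h⟩ | ⟨h, _⟩)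
    · exact Y.loopless.irrefl _ h
    · exact X.loopless.irrefl _ h
    · exact X.loopless.irrefl _ h⟩

/-- The tensor (direct, categorical) product of two simple graphs. -/
def tensorProd {α β : Type*} (X : SimpleGraph α) (Y : SimpleGraph β) :
    SimpleGraph (α × β) where
  Adj p q := X.Adj p.1 q.1 ∧ Y.Adj p.2 q.2
  symm := ⟨fun _ _ ⟨h1, h2⟩ => ⟨h1.symm, h2.symm⟩⟩
  loopless := ⟨fun _ ⟨h1, _⟩ => X.loopless.irrefl _ h1⟩

/-- The tensor (direct) product of a family of simple graphs: two tuples are adjacent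
iff they are adjacent in every coordinate (for a nonempty index type this coincides with
the definition below, where distinctness is required to keep the graph loopless). -/
def tensorPi {ι : Type*} {α : ι → Type*} (X : ∀ i, SimpleGraph (α i)) :
    SimpleGraph (∀ i, α i) where
  Adj f g := f ≠ g ∧ ∀ i, (X i).Adj (f i) (g i)
  symm := ⟨fun _ _ ⟨hne, h⟩ => ⟨hne.symm, fun i => (h i).symm⟩⟩
  loopless := ⟨fun _ h => h.1 rfl⟩

/-- The disjoint union of `ι`-indexed copies of a simple graph `X`. -/
def copiesGraph (ι : Type*) {α : Type*} (X : SimpleGraph α) : SimpleGraph (ι × α) where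
  Adj p q := p.1 = q.1 ∧ X.Adj p.2 q.2
  symm := ⟨fun _ _ ⟨h1, h2⟩ => ⟨h1.symm, h2.symm⟩⟩
  loopless := ⟨fun _ h => X.loopless.irrefl _ h.2⟩

/-- The lexicographic product (wreath product) `X[Y]` of simple graphs. -/
def lexProd {α β : Type*} (X : SimpleGraph α) (Y : SimpleGraph β) :
    SimpleGraph (α × β) where
  Adj p q := X.Adj p.1 q.1 ∨ (p.1 = q.1 ∧ Y.Adj p.2 q.2)
  symm := ⟨by
    rintro p q (h | ⟨h1, h2⟩)
    · exact Or.inl h.symm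
    · exact Or.inr ⟨h1.symm, h2.symm⟩⟩
  loopless := ⟨by
    rintro p (h | ⟨_, h⟩)
    · exact X.loopless.irrefl _ h
    · exact Y.loopless.irrefl _ h⟩

/-- A simple graph is complete multipartite with `k` parts if its vertex set can be
partitioned into `k` (nonempty) parts so that two vertices are adjacent iff they lie in
different parts. -/
def IsCompleteMultipartiteWith {α : Type*} (X : SimpleGraph α) (k : ℕ) : Prop :=
  ∃ f : α → Fin k, Function.Surjective f ∧ ∀ a b : α, X.Adj a b ↔ f a ≠ f b

/-- An independent set (coclique) of a simple graph. -/
def IsIndep {α : Type*} (X : SimpleGraph α) (A : Set α) : Prop :=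
  ∀ a ∈ A, ∀ b ∈ A, ¬ X.Adj a b

/-- The independence number `α(X)` of a simple graph. -/
noncomputable def indepNum {α : Type*} (X : SimpleGraph α) : ℕ :=
  sSup {k : ℕ | ∃ A : Set α, IsIndep X A ∧ Nat.card A = k}

/-- The closed neighbourhood `N[A]` of a set `A` of vertices. -/
def closedNbhd {α : Type*} (X : SimpleGraph α) (A : Set α) : Set α :=
  {b | ∃ a ∈ A, a = b ∨ X.Adj a b}

/-- A graph `X` is IS-primitive if there is no non-maximum independent set `A` with
`|A| / |N[A]| = α(X) / |V(X)|`. -/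
def IsISPrimitive {α : Type*} (X : SimpleGraph α) : Prop :=
  ¬ ∃ A : Set α, IsIndep X A ∧ Nat.card A < indepNum X ∧
    (Nat.card A : ℚ) / (Nat.card (closedNbhd X A) : ℚ) =
      (indepNum X : ℚ) / (Nat.card α : ℚ)

/-- A simple graph is vertex-transitive if its automorphism group acts transitively on the
vertices. -/
def IsVertexTransitive {α : Type*} (X : SimpleGraph α) : Prop :=
  ∀ a b : α, ∃ e : X ≃g X, e a = b

/-! ### External and internal direct products of permutation groups -/

/-- The canonical monoid homomorphism `Sym(V) × Sym(W) → Sym(V × W)`. -/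
def permProdCongrHom (V W : Type*) : Equiv.Perm V × Equiv.Perm W →* Equiv.Perm (V × W) where
  toFun p := Equiv.prodCongr p.1 p.2
  map_one' := Equiv.ext fun _ => rfl
  map_mul' := fun _ _ => Equiv.ext fun _ => rfl

/-- The external direct product of permutation groups `G ≤ Sym(V)` and `H ≤ Sym(W)`,
acting on `V × W` by `(g,h)⬝(v,w) = (g v, h w)`. -/
def extProd {V W : Type*} (G : Subgroup (Equiv.Perm V)) (H : Subgroup (Equiv.Perm W)) :
    Subgroup (Equiv.Perm (V × W)) :=
  Subgroup.map (permProdCongrHom V W) (G.prod H)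

/-- The internal direct product of a family of permutation groups `G i ≤ Sym(V i)`,
acting componentwise on the disjoint union `Σ i, V i`. -/
def intProd {ι : Type*} {V : ι → Type*} (G : ∀ i, Subgroup (Equiv.Perm (V i))) :
    Subgroup (Equiv.Perm (Σ i, V i)) :=
  Subgroup.map (Equiv.Perm.sigmaCongrRightHom V) (Subgroup.pi Set.univ G)

/-! ### Wreath products of permutation groups -/

/-- The permutation of `V × {1,…,n}` associated to an element `((g₁,…,gₙ), h)` of the
wreath product: `(a, i) ↦ (gᵢ a, h i)`. -/
def wreathPerm {V : Type*} {n : ℕ} (g : Fin n → Equiv.Perm V) (h : Equiv.Perm (Fin n)) :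
    Equiv.Perm (V × Fin n) where
  toFun p := (g p.2 p.1, h p.2)
  invFun p := ((g (h⁻¹ p.2))⁻¹ p.1, h⁻¹ p.2)
  left_inv := by rintro ⟨a, i⟩; simp
  right_inv := by rintro ⟨b, j⟩; simp

/-- The wreath product `G ≀ H` of `G ≤ Sym(V)` by `H ≤ Sₙ`, as a permutation group
acting on `V × {1,…,n}`. -/
def wreathProd {V : Type*} {n : ℕ} (G : Subgroup (Equiv.Perm V))
    (H : Subgroup (Equiv.Perm (Fin n))) : Subgroup (Equiv.Perm (V × Fin n)) where
  carrier := {σ | ∃ (g : Fin n → Equiv.Perm V) (h : Equiv.Perm (Fin n)),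
    (∀ i, g i ∈ G) ∧ h ∈ H ∧ σ = wreathPerm g h}
  one_mem' := ⟨fun _ => 1, 1, fun _ => G.one_mem, H.one_mem, Equiv.ext fun _ => rfl⟩
  mul_mem' := by
    rintro σ τ ⟨g, h, hg, hh, rfl⟩ ⟨g', h', hg', hh', rfl⟩
    exact ⟨fun i => g (h' i) * g' i, h * h',
      fun i => G.mul_mem (hg _) (hg' _), H.mul_mem hh hh', Equiv.ext fun _ => rfl⟩
  inv_mem' := by
    rintro σ ⟨g, h, hg, hh, rfl⟩
    exact ⟨fun i => (g (h⁻¹ i))⁻¹, h⁻¹,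
      fun i => G.inv_mem (hg _), H.inv_mem hh, Equiv.ext fun _ => rfl⟩

theorem mem_wreathProd {V : Type*} {n : ℕ} {G : Subgroup (Equiv.Perm V)}
    {H : Subgroup (Equiv.Perm (Fin n))} {σ : Equiv.Perm (V × Fin n)} :
    σ ∈ wreathProd G H ↔ ∃ (g : Fin n → Equiv.Perm V) (h : Equiv.Perm (Fin n)),
      (∀ i, g i ∈ G) ∧ h ∈ H ∧ σ = wreathPerm g h := Iff.rfl
set_option linter.unusedSectionVars false
set_option linter.unusedVariables false






section Aux
variable {V : Type*}

lemma stabCard_congr {K : Subgroup (Equiv.Perm V)} (hK : IsTransitive K) (v w : V) :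
    Nat.card (stabSet K v) = Nat.card (stabSet K w) := by
  obtain ⟨σ, hσK, hσv⟩ := hK v w
  set σ' : K := ⟨σ, hσK⟩ with hσ'
  have hinv : (σ : Equiv.Perm V)⁻¹ w = v := by rw [← hσv]; simp
  refine Nat.card_congr ⟨fun g => ⟨σ' * g.1 * σ'⁻¹, ?_⟩, fun g => ⟨σ'⁻¹ * g.1 * σ', ?_⟩, ?_, ?_⟩
  · have hg := g.2
    simp only [stabSet, Set.mem_setOf_eq] at hg ⊢
    simp [hσ', hinv, hg, hσv]
    rw [show (Equiv.symm σ) w = v from hinv, hg, hσv]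
  · have hg := g.2
    simp only [stabSet, Set.mem_setOf_eq] at hg ⊢
    simp [hσ', hσv, hg, hinv]
    exact hinv
  · rintro ⟨g, hg⟩
    ext
    simp [mul_assoc]
  · rintro ⟨g, hg⟩
    ext
    simp [mul_assoc]

noncomputable def maxInter (K : Subgroup (Equiv.Perm V)) : ℕ :=
  sSup {k : ℕ | ∃ I : Set K, IsIntersecting K I ∧ Nat.card I = k}

lemma maxInter_le [Finite V] (K : Subgroup (Equiv.Perm V)) (I : Set K)
    (hI : IsIntersecting K I) : Nat.card I ≤ maxInter K := by
  refine le_csSup ⟨Nat.card K, ?_⟩ ⟨I, hI, rfl⟩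
  rintro k ⟨J, _, rfl⟩
  exact Nat.card_le_card_of_injective (Subtype.val : J → K) Subtype.val_injective

lemma exists_maxInter [Finite V] (K : Subgroup (Equiv.Perm V)) :
    ∃ I : Set K, IsIntersecting K I ∧ Nat.card I = maxInter K := by
  have hne : {k : ℕ | ∃ I : Set K, IsIntersecting K I ∧ Nat.card I = k}.Nonempty := by
    refine ⟨_, ∅, fun g hg => absurd hg (Set.notMem_empty g), rfl⟩
  have hbdd : BddAbove {k : ℕ | ∃ I : Set K, IsIntersecting K I ∧ Nat.card I = k} := by
    refine ⟨Nat.card K, ?_⟩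
    rintro k ⟨J, _, rfl⟩
    exact Nat.card_le_card_of_injective (Subtype.val : J → K) Subtype.val_injective
  exact Nat.sSup_mem hne hbdd

lemma interDensity_eq_max_div [Fintype V] (K : Subgroup (Equiv.Perm V))
    (hK : IsTransitive K) (v : V) :
    interDensity K = (maxInter K : ℝ) / (Nat.card (stabSet K v) : ℝ) := by
  have hsne : (stabSet K v).Nonempty := ⟨1, by simp [stabSet]⟩
  haveI : Nonempty (stabSet K v) := hsne.to_subtype
  have hspos : (0 : ℝ) < (Nat.card (stabSet K v) : ℝ) := by exact_mod_cast Nat.card_pos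
  have hbound : ∀ x ∈ {x : ℝ | ∃ (I : Set K) (w : V), IsIntersecting K I ∧
      x = (Nat.card I : ℝ) / (Nat.card (stabSet K w) : ℝ)},
      x ≤ (maxInter K : ℝ) / (Nat.card (stabSet K v) : ℝ) := by
    rintro x ⟨I, w, hI, rfl⟩
    rw [stabCard_congr hK w v]
    rw [div_le_div_iff_of_pos_right hspos]
    exact_mod_cast maxInter_le K I hI
  obtain ⟨Imax, hImax, hIcard⟩ := exists_maxInter K
  refine le_antisymm (csSup_le ⟨_, ∅, v, fun g hg => absurd hg (Set.notMem_empty g), rfl⟩ hbound)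
    (le_csSup ⟨_, hbound⟩ ⟨Imax, v, hImax, by rw [hIcard]⟩)

end Aux




section Aux2
variable {V : Type*} {n : ℕ}

@[simp] lemma wreathPerm_apply (g : Fin n → Equiv.Perm V) (h : Equiv.Perm (Fin n))
    (a : V) (i : Fin n) : wreathPerm g h (a, i) = (g i a, h i) := rfl

lemma wreath_transitive (G : Subgroup (Equiv.Perm V)) (H : Subgroup (Equiv.Perm (Fin n)))
    (hG : IsTransitive G) (hH : IsTransitive H) : IsTransitive (wreathProd G H) := by
  rintro ⟨a, i⟩ ⟨b, j⟩
  obtain ⟨g, hg, hgab⟩ := hG a b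
  obtain ⟨h, hh, hhij⟩ := hH i j
  exact ⟨wreathPerm (fun _ => g) h, ⟨_, _, fun _ => hg, hh, rfl⟩, by simp [hgab, hhij]⟩

variable [Nonempty V] (G : Subgroup (Equiv.Perm V)) (H : Subgroup (Equiv.Perm (Fin n)))

noncomputable def wreathEquiv : ((Fin n → G) × H) ≃ (wreathProd G H) := by
  refine Equiv.ofBijective
    (fun p => ⟨wreathPerm (fun i => (p.1 i : Equiv.Perm V)) (p.2 : Equiv.Perm (Fin n)),
      ⟨_, _, fun i => (p.1 i).2, p.2.2, rfl⟩⟩) ⟨?_, ?_⟩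
  · rintro ⟨g, h⟩ ⟨g', h'⟩ hEq
    have hEq' : ∀ (a : V) (i : Fin n),
        ((g i : Equiv.Perm V) a, (h : Equiv.Perm (Fin n)) i) =
        ((g' i : Equiv.Perm V) a, (h' : Equiv.Perm (Fin n)) i) := by
      intro a i
      have := congrArg Subtype.val hEq
      exact Equiv.ext_iff.mp this (a, i)
    have h2 : h = h' := Subtype.ext (Equiv.ext fun i =>
      congrArg Prod.snd (hEq' (Classical.arbitrary V) i))
    have h1 : g = g' := funext fun i => Subtype.ext (Equiv.ext fun a =>
      congrArg Prod.fst (hEq' a i))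
    rw [h1, h2]
  · rintro ⟨σ, g, h, hg, hh, rfl⟩
    exact ⟨(fun i => ⟨g i, hg i⟩, ⟨h, hh⟩), rfl⟩

@[simp] lemma wreathEquiv_apply_coe (p : (Fin n → G) × H) :
    ((wreathEquiv G H p : (wreathProd G H)) : Equiv.Perm (V × Fin n)) =
      wreathPerm (fun i => (p.1 i : Equiv.Perm V)) (p.2 : Equiv.Perm (Fin n)) := rfl

noncomputable def splitEquiv (i₀ : Fin n) (S : Set G) :
    {p : (Fin n → G) × H // p.1 i₀ ∈ S ∧ (p.2 : Equiv.Perm (Fin n)) i₀ = i₀} ≃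
      (S × ({j : Fin n // j ≠ i₀} → G)) × {h : H // (h : Equiv.Perm (Fin n)) i₀ = i₀} where
  toFun p := ((⟨p.1.1 i₀, p.2.1⟩, fun j => p.1.1 j.1), ⟨p.1.2, p.2.2⟩)
  invFun q := ⟨(fun j => if hj : j = i₀ then q.1.1.1 else q.1.2 ⟨j, hj⟩, q.2.1),
    ⟨by simp [q.1.1.2], q.2.2⟩⟩
  left_inv p := by
    refine Subtype.ext (Prod.ext ?_ rfl)
    funext j
    by_cases hj : j = i₀
    · subst hj; simp
    · simp [hj]
  right_inv q := by
    refine Prod.ext (Prod.ext ?_ ?_) rfl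
    · exact Subtype.ext (by simp)
    · funext j
      simp [j.2]

lemma card_split [Fintype V] (hn : 0 < n) (i₀ : Fin n) (S : Set G) :
    Nat.card {p : (Fin n → G) × H | p.1 i₀ ∈ S ∧ (p.2 : Equiv.Perm (Fin n)) i₀ = i₀} =
      Nat.card S * (Nat.card G ^ (n - 1) * Nat.card (stabSet H i₀)) := by
  classical
  rw [Set.coe_setOf, Nat.card_congr (splitEquiv G H i₀ S), Nat.card_prod, Nat.card_prod]
  have h1 : Nat.card ({j : Fin n // j ≠ i₀} → G) = Nat.card G ^ (n - 1) := by
    rw [Nat.card_fun]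
    congr 1
    rw [Nat.card_eq_fintype_card]
    simp [Fintype.card_subtype_compl]
  have h2 : Nat.card {h : H // (h : Equiv.Perm (Fin n)) i₀ = i₀} =
      Nat.card (stabSet H i₀) := rfl
  rw [h1, h2, mul_assoc]

end Aux2

section Aux3
variable {V : Type*}

lemma tuple_counting [Fintype V] {G : Subgroup (Equiv.Perm V)} {n : ℕ} {M : ℕ}
    (hM : ∀ I : Set G, IsIntersecting G I → Nat.card I ≤ M)
    (A : Set (Fin n → G))
    (hA : ∀ f ∈ A, ∀ f' ∈ A, ∃ (i : Fin n) (a : V),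
      (f i : Equiv.Perm V) a = (f' i : Equiv.Perm V) a) :
    Nat.card A * Nat.card G ≤ M * Nat.card G ^ n := by
  classical
  haveI : Fintype G := Fintype.ofFinite G
  set T : Set ((Fin n → G) × G) := {p | (fun i => p.2 * p.1 i) ∈ A} with hT
  have e1 : T ≃ A × G :=
    { toFun := fun q => (⟨fun i => q.1.2 * q.1.1 i, q.2⟩, q.1.2)
      invFun := fun q => ⟨(fun i => (q.2)⁻¹ * (q.1 : Fin n → G) i, q.2), by
        show (fun i => q.2 * ((q.2)⁻¹ * (q.1 : Fin n → G) i)) ∈ A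
        simp only [mul_inv_cancel_left]
        exact q.1.2⟩
      left_inv := fun q => by
        refine Subtype.ext (Prod.ext ?_ rfl)
        funext i
        exact inv_mul_cancel_left _ _
      right_inv := fun q => by
        refine Prod.ext (Subtype.ext ?_) rfl
        funext i
        exact mul_inv_cancel_left _ _ }
  have e2 : T ≃ Σ c : Fin n → G, {x : G // (fun i => x * c i) ∈ A} :=
    { toFun := fun q => ⟨q.1.1, q.1.2, q.2⟩
      invFun := fun s => ⟨(s.1, s.2.1), s.2.2⟩
      left_inv := fun q => rfl
      right_inv := fun s => rfl }
  have hcardT : Nat.card T = Nat.card A * Nat.card G := by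
    rw [Nat.card_congr e1, Nat.card_prod]
  have hfiber : ∀ c : Fin n → G, Nat.card {x : G // (fun i => x * c i) ∈ A} ≤ M := by
    intro c
    refine hM {x : G | (fun i => x * c i) ∈ A} ?_
    intro x hx y hy
    obtain ⟨i, a, hia⟩ := hA _ hx _ hy
    refine ⟨(c i : Equiv.Perm V) a, ?_⟩
    simpa using hia
  have hsum : Nat.card T ≤ M * Nat.card G ^ n := by
    rw [Nat.card_congr e2, Nat.card_eq_fintype_card, Fintype.card_sigma]
    calc (∑ c : Fin n → G, Fintype.card {x : G // (fun i => x * c i) ∈ A})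
        ≤ ∑ _c : Fin n → G, M := by
          refine Finset.sum_le_sum fun c _ => ?_
          rw [← Nat.card_eq_fintype_card]
          exact hfiber c
      _ = Fintype.card (Fin n → G) * M := by
          rw [Finset.sum_const, Finset.card_univ, smul_eq_mul]
      _ = M * Nat.card G ^ n := by
          rw [Fintype.card_fun, ← Nat.card_eq_fintype_card, Fintype.card_fin, mul_comm]
  rw [← hcardT]
  exact hsum

variable [Fintype V] [Nonempty V] {n : ℕ}

lemma wreath_UB (hn : 0 < n)
    (G : Subgroup (Equiv.Perm V)) (H : Subgroup (Equiv.Perm (Fin n)))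
    (hHtrans : IsTransitive H)
    (hEKR : ∀ I : Set H, IsIntersecting H I →
      Nat.card I ≤ ⨆ v : Fin n, Nat.card (stabSet H v)) {M : ℕ}
    (hM : ∀ I : Set G, IsIntersecting G I → Nat.card I ≤ M)
    (J : Set (wreathProd G H)) (hJ : IsIntersecting (wreathProd G H) J) :
    Nat.card J * Nat.card G ≤
      (Nat.card (stabSet H ⟨0, hn⟩) * M) * Nat.card G ^ n := by
  classical
  haveI : Nonempty (Fin n) := ⟨⟨0, hn⟩⟩
  set i₀ : Fin n := ⟨0, hn⟩
  set e := wreathEquiv G H with he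
  set J' : Set ((Fin n → G) × H) := e ⁻¹' J with hJ'
  have hcard : Nat.card J = Nat.card J' := by
    rw [← Set.image_preimage_eq J e.surjective, Nat.card_image_of_injective e.injective]
  -- intersecting property on the product side
  have hmeet : ∀ p ∈ J', ∀ p' ∈ J', ∃ (a : V) (i : Fin n),
      (p.1 i : Equiv.Perm V) a = (p'.1 i : Equiv.Perm V) a ∧
      (p.2 : Equiv.Perm (Fin n)) i = (p'.2 : Equiv.Perm (Fin n)) i := by
    intro p hp p' hp'
    obtain ⟨⟨a, i⟩, hai⟩ := hJ (e p) hp (e p') hp'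
    rw [wreathEquiv_apply_coe, wreathEquiv_apply_coe] at hai
    simp only [wreathPerm_apply, Prod.mk.injEq] at hai
    exact ⟨a, i, hai.1, hai.2⟩
  set P : Set H := Prod.snd '' J' with hP
  have hPint : IsIntersecting H P := by
    rintro h ⟨p, hp, rfl⟩ h' ⟨p', hp', rfl⟩
    obtain ⟨a, i, _, hi⟩ := hmeet p hp p' hp'
    exact ⟨i, hi⟩
  have hPcard : Nat.card P ≤ Nat.card (stabSet H i₀) := by
    refine (hEKR P hPint).trans ?_
    have : ∀ j : Fin n, Nat.card (stabSet H j) = Nat.card (stabSet H i₀) :=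
      fun j => stabCard_congr hHtrans j i₀
    simp only [this]
    exact ciSup_le fun _ => le_rfl
  -- sigma decomposition
  haveI : Fintype G := Fintype.ofFinite G
  haveI : Fintype H := Fintype.ofFinite H
  have esig : J' ≃ Σ h : P, {g : Fin n → G // (g, (h : H)) ∈ J'} :=
    { toFun := fun p => ⟨⟨p.1.2, ⟨p.1, p.2, rfl⟩⟩, ⟨p.1.1, p.2⟩⟩
      invFun := fun s => ⟨(s.2.1, s.1.1), s.2.2⟩
      left_inv := fun p => rfl
      right_inv := fun s => rfl }
  have hfib : ∀ h : P, Nat.card {g : Fin n → G // (g, (h : H)) ∈ J'} * Nat.card G ≤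
      M * Nat.card G ^ n := by
    intro h
    refine tuple_counting hM {g : Fin n → G | (g, (h : H)) ∈ J'} ?_
    intro f hf f' hf'
    obtain ⟨a, i, hgi, _⟩ := hmeet _ hf _ hf'
    exact ⟨i, a, hgi⟩
  have : Nat.card J' * Nat.card G ≤ Nat.card P * (M * Nat.card G ^ n) := by
    rw [Nat.card_congr esig, Nat.card_eq_fintype_card, Fintype.card_sigma, Finset.sum_mul]
    calc (∑ h : P, Fintype.card {g : Fin n → G // (g, (h : H)) ∈ J'} * Nat.card G)
        ≤ ∑ _h : P, M * Nat.card G ^ n := by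
          refine Finset.sum_le_sum fun h _ => ?_
          rw [← Nat.card_eq_fintype_card]
          exact hfib h
      _ = Nat.card P * (M * Nat.card G ^ n) := by
          simp [Finset.sum_const, Finset.card_univ, smul_eq_mul, Nat.card_eq_fintype_card]
  rw [hcard]
  calc Nat.card J' * Nat.card G ≤ Nat.card P * (M * Nat.card G ^ n) := this
    _ ≤ Nat.card (stabSet H i₀) * (M * Nat.card G ^ n) := by
        exact Nat.mul_le_mul_right _ hPcard
    _ = (Nat.card (stabSet H i₀) * M) * Nat.card G ^ n := by ring

end Aux3


/-- If `G ≤ Sym(V)` is transitive and `H ≤ Sₙ` is transitive with the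
EKR-property, then `ρ(G ≀ H) = ρ(G)`. -/
theorem interDensity_wreathProd_of_EKR {V : Type*} [Fintype V] [Nonempty V] {n : ℕ}
    (hn : 0 < n) (G : Subgroup (Equiv.Perm V)) (H : Subgroup (Equiv.Perm (Fin n)))
    (hG : IsTransitive G) (hH : IsTransitive H) (hEKR : HasEKR H) :
    interDensity (wreathProd G H) = interDensity G := by
  classical
  have v₀ : V := Classical.arbitrary V
  have i₀ : Fin n := ⟨0, hn⟩
  haveI : Nonempty (Fin n) := ⟨⟨0, hn⟩⟩
  have hWtrans : IsTransitive (wreathProd G H) := wreath_transitive G H hG hH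
  set q := Nat.card G with hq
  set M := maxInter G with hMdef
  set t := Nat.card (stabSet H (⟨0, hn⟩ : Fin n)) with ht
  set s := Nat.card (stabSet G v₀) with hs
  haveI : Nonempty G := ⟨1⟩
  have hqpos : 0 < q := Nat.card_pos
  have htpos : 0 < t := by
    haveI : Nonempty (stabSet H (⟨0, hn⟩ : Fin n)) := ⟨⟨1, by simp [stabSet]⟩⟩
    exact Nat.card_pos
  have hspos : 0 < s := by
    haveI : Nonempty (stabSet G v₀) := ⟨⟨1, by simp [stabSet]⟩⟩
    exact Nat.card_pos
  obtain ⟨I, hIint, hIcard⟩ := exists_maxInter G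
  set e := wreathEquiv G H with he
  set J' : Set ((Fin n → G) × H) :=
    {p | p.1 (⟨0, hn⟩ : Fin n) ∈ I ∧ (p.2 : Equiv.Perm (Fin n)) ⟨0, hn⟩ = ⟨0, hn⟩} with hJ'
  have hJ'card : Nat.card J' = M * (q ^ (n - 1) * t) := by
    rw [hJ', card_split G H hn ⟨0, hn⟩ I, hIcard]
  have hJint : IsIntersecting (wreathProd G H) (e '' J') := by
    rintro σ ⟨p, hp, rfl⟩ τ ⟨p', hp', rfl⟩
    obtain ⟨a, ha⟩ := hIint _ hp.1 _ hp'.1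
    refine ⟨(a, ⟨0, hn⟩), ?_⟩
    rw [he, wreathEquiv_apply_coe, wreathEquiv_apply_coe]
    simp only [wreathPerm_apply]
    rw [ha, hp.2, hp'.2]
  have hJcard : Nat.card (e '' J') = M * (q ^ (n - 1) * t) := by
    rw [Nat.card_image_of_injective e.injective, hJ'card]
  have hMW_ge : M * (q ^ (n - 1) * t) ≤ maxInter (wreathProd G H) :=
    hJcard ▸ maxInter_le (wreathProd G H) _ hJint
  have hMW_le : maxInter (wreathProd G H) ≤ M * (q ^ (n - 1) * t) := by
    obtain ⟨Jm, hJmint, hJmcard⟩ := exists_maxInter (wreathProd G H)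
    have hub := wreath_UB hn G H hH hEKR (fun I hI => maxInter_le G I hI) Jm hJmint
    rw [hJmcard] at hub
    have hqn : q ^ n = q ^ (n - 1) * q := by rw [← pow_succ, Nat.sub_add_cancel hn]
    have hub2 : maxInter (wreathProd G H) * q ≤ (M * (q ^ (n - 1) * t)) * q := by
      calc maxInter (wreathProd G H) * q ≤ (t * M) * q ^ n := hub
        _ = (M * (q ^ (n - 1) * t)) * q := by rw [hqn]; ring
    exact Nat.le_of_mul_le_mul_right hub2 hqpos
  have hMW : maxInter (wreathProd G H) = M * (q ^ (n - 1) * t) :=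
    le_antisymm hMW_le hMW_ge
  have hstabW : Nat.card (stabSet (wreathProd G H) (v₀, (⟨0, hn⟩ : Fin n))) =
      s * (q ^ (n - 1) * t) := by
    have hset : stabSet (wreathProd G H) (v₀, (⟨0, hn⟩ : Fin n)) =
        e '' {p : (Fin n → G) × H | p.1 (⟨0, hn⟩ : Fin n) ∈ stabSet G v₀ ∧
          (p.2 : Equiv.Perm (Fin n)) ⟨0, hn⟩ = ⟨0, hn⟩} := by
      ext σ
      obtain ⟨p, rfl⟩ := e.surjective σ
      rw [Function.Injective.mem_set_image e.injective]
      show ((e p : (wreathProd G H)) : Equiv.Perm (V × Fin n)) (v₀, ⟨0, hn⟩) =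
        (v₀, ⟨0, hn⟩) ↔ _
      rw [he, wreathEquiv_apply_coe]
      simp [Prod.ext_iff, stabSet]
    rw [hset, Nat.card_image_of_injective e.injective,
      card_split G H hn ⟨0, hn⟩ (stabSet G v₀)]
  rw [interDensity_eq_max_div G hG v₀,
    interDensity_eq_max_div (wreathProd G H) hWtrans (v₀, ⟨0, hn⟩), hMW, hstabW]
  have hqR : (0:ℝ) < (q : ℝ) := by exact_mod_cast hqpos
  have htR : (0:ℝ) < (t : ℝ) := by exact_mod_cast htpos
  push_cast
  rw [mul_div_mul_right _ _ (by positivity : ((q:ℝ) ^ (n - 1) * (t:ℝ)) ≠ 0)]
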